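/- There exists δ0 > 0 such that for all 0 < δ ≤ δ0 the following holds. Set δ1 = 3 + δ, δ2 = δ, and define r, c1, b by r = (1 − δ2 − δ1δ2 − δ1²δ2 − δ1³δ2) / (δ1² + δ1³(δ1+1) + δ1 + 1), c1 = δ1 + δ2/r, b = (c1+1)δ1 + δ2/r. If d : V × V → [0,1] is symmetric with d_uu = 0 and satisfies the (δ1,δ2)-approximate triangle inequality, and u, v, w ∈ V satisfy d_uw ≤ c1·r and d_vw > b·r, then d_uv ≥ r. -/

import Mathlib

open Finset

/-- Positive neighborhood of `u`. -/
def Np {V : Type*} [Fintype V] (pos : V → V → Bool) (u : V) : Finset V :=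
  Finset.univ.filter (fun v => pos u v)

/-- Negative neighborhood of `u`. -/
def Nm {V : Type*} [Fintype V] (pos : V → V → Bool) (u : V) : Finset V :=
  Finset.univ.filter (fun v => ¬ pos u v)

/-- The correlation metric. -/
noncomputable def corrDist {V : Type*} [Fintype V] [DecidableEq V]
    (pos : V → V → Bool) (u v : V) : ℝ :=
  1 - ((Np pos u ∩ Np pos v).card : ℝ) /
      ((Fintype.card V : ℝ) - ((Nm pos u ∩ Nm pos v).card : ℝ))

/-- Number of disagreements incident to `u` under the clustering `C`. -/
def yC {V : Type*} [Fintype V] [DecidableEq V] (pos : V → V → Bool) (C : V → ℕ) (u : V) : ℕ :=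
  (Finset.univ.filter (fun v => v ≠ u ∧
    ((pos u v ∧ C u ≠ C v) ∨ (¬ (pos u v) ∧ C u = C v)))).card

/-- Optimal value of the Min Max correlation clustering objective. -/
noncomputable def OPT {V : Type*} [Fintype V] [DecidableEq V] (pos : V → V → Bool) : ℕ :=
  sInf { k : ℕ | ∃ C : V → ℕ, k = Finset.univ.sup (yC pos C) }

/-- `d̂`. -/
noncomputable def dhat {V : Type*} [Fintype V] [DecidableEq V]
    (pos : V → V → Bool) (u v : V) : ℝ :=
  if pos u v then corrDist pos u v else 1 - corrDist pos u v

/-- number of samples. -/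
noncomputable def mSample (V : Type*) [Fintype V] (ε : ℝ) : ℕ :=
  ⌈(32 / ε ^ 2) * Real.log (Fintype.card V)⌉₊

/-- Sample space: one subset of `N_u^+` of size `min m |N_u^+|` per vertex `u`. -/
abbrev SampleSpace {V : Type*} [Fintype V] [DecidableEq V]
    (pos : V → V → Bool) (m : ℕ) : Type _ :=
  ∀ u : V, {s : Finset V // s ⊆ Np pos u ∧ s.card = min m (Np pos u).card}

/-- Uniform probability of an event over a finite sample space. -/
noncomputable def prob {Ω : Type*} [Fintype Ω] (E : Set Ω) : ℝ :=
  (E.ncard : ℝ) / (Fintype.card Ω : ℝ)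

noncomputable def West {V : Type*} [Fintype V] [DecidableEq V]
    (pos : V → V → Bool) {m : ℕ} (ω : SampleSpace pos m) (u v : V) : ℝ :=
  if m ≤ (Np pos u).card then
    ((Np pos u).card : ℝ) / m * (((ω u).1 ∩ Np pos v).card : ℝ)
  else ((Np pos u ∩ Np pos v).card : ℝ)

noncomputable def Yest {V : Type*} [Fintype V] [DecidableEq V]
    (pos : V → V → Bool) {m : ℕ} (ω : SampleSpace pos m) (u v : V) : ℝ :=
  if m ≤ (Np pos u).card then
    ((Np pos u).card : ℝ) / m * (((ω u).1 ∩ Nm pos v).card : ℝ)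
  else ((Np pos u ∩ Nm pos v).card : ℝ)

/-- Initial estimate of the correlation metric for a pair labeled with `|N_v^+| ≥ |N_u^+|`. -/
noncomputable def dbar {V : Type*} [Fintype V] [DecidableEq V]
    (pos : V → V → Bool) {m : ℕ} (ω : SampleSpace pos m) (u v : V) : ℝ :=
  (Yest pos ω u v + Yest pos ω v u) / (((Np pos u).card : ℝ) + Yest pos ω v u)

/-- Initial estimate, with the pair relabeled so the vertex with larger
positive neighborhood comes second. -/
noncomputable def dbarS {V : Type*} [Fintype V] [DecidableEq V]
    (pos : V → V → Bool) {m : ℕ} (ω : SampleSpace pos m) (u v : V) : ℝ :=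
  if (Np pos u).card ≤ (Np pos v).card then dbar pos ω u v else dbar pos ω v u

noncomputable def cc1 (ε : ℝ) : ℝ := (1 + ε) / (1 - ε)
noncomputable def hh1 (ε : ℝ) : ℝ := 2 * ε / (1 - ε)
noncomputable def cc2 (ε : ℝ) : ℝ := (1 + ε) / (1 - ε)
noncomputable def hh2 (ε : ℝ) : ℝ := 2 * ε / (1 - ε)
noncomputable def cc3 (ε : ℝ) : ℝ := ((1 + ε) / (1 - ε)) ^ 2
noncomputable def hh3 (ε : ℝ) : ℝ := (2 * ε / (1 - ε)) * (1 + 2 * (1 + ε) / (1 - ε))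
noncomputable def cc4 (ε : ℝ) : ℝ := (2 * cc3 ε + 1) * cc3 ε
noncomputable def hh4 (ε : ℝ) : ℝ := (4 * cc3 ε + 1) * (2 * cc3 ε + 1) * hh3 ε
noncomputable def DD (ε : ℝ) : ℝ := 2 * cc3 ε

/-- Post-processed estimate. -/
noncomputable def dtilde {V : Type*} [Fintype V] [DecidableEq V] (ε : ℝ)
    (pos : V → V → Bool) {m : ℕ} (ω : SampleSpace pos m) (u v : V) : ℝ :=
  if pos u v ∧ dbarS pos ω u v ≤ 2 * hh3 ε then 0
  else if ¬ (pos u v) ∧ 1 / (2 * cc3 ε + 1) ≤ dbarS pos ω u v then 1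
  else dbarS pos ω u v

/-- The radius `r(δ₁, δ₂)` from Appendix B. -/
noncomputable def rr (δ1 δ2 : ℝ) : ℝ :=
  (1 - δ2 - δ1 * δ2 - δ1 ^ 2 * δ2 - δ1 ^ 3 * δ2) /
    (δ1 ^ 2 + δ1 ^ 3 * (δ1 + 1) + δ1 + 1)

noncomputable def c1const (δ1 δ2 : ℝ) : ℝ := δ1 + δ2 / rr δ1 δ2
noncomputable def bconst (δ1 δ2 : ℝ) : ℝ := (c1const δ1 δ2 + 1) * δ1 + δ2 / rr δ1 δ2
noncomputable def c2const (δ1 δ2 : ℝ) : ℝ := δ1 * (bconst δ1 δ2 + 1) + δ2 / rr δ1 δ2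

/-- analogue of Lemma B.4. -/
theorem lemma_B4_inequality :
    ∃ δ0 : ℝ, 0 < δ0 ∧
      ∀ δ : ℝ, 0 < δ → δ ≤ δ0 →
        ∀ (V : Type) [Fintype V] (d : V → V → ℝ),
          (∀ u v, d u v = d v u) →
          (∀ u, d u u = 0) →
          (∀ u v, 0 ≤ d u v ∧ d u v ≤ 1) →
          (∀ u v w, d u v ≤ (3 + δ) * (d u w + d w v) + δ) →
          ∀ u v w : V,
            d u w ≤ c1const (3 + δ) δ * rr (3 + δ) δ →
            bconst (3 + δ) δ * rr (3 + δ) δ < d v w →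
            rr (3 + δ) δ ≤ d u v := by
  refine ⟨1/100, by norm_num, ?_⟩
  intro δ hδ hδ0 V _ d hsymm hrefl hbd htri u v w huw hvw
  have hr : 0 < rr (3 + δ) δ := by
    rw [rr]
    have h1 : δ * δ ≤ δ / 100 := by nlinarith
    have h2 : δ * δ * δ ≤ δ / 10000 := by nlinarith
    have h3 : δ * δ * δ * δ ≤ δ / 1000000 := by nlinarith
    apply div_pos
    · nlinarith
    · nlinarith
  set δ1 : ℝ := 3 + δ with hδ1
  set r : ℝ := rr δ1 δ with hrdef
  have hc1 : c1const δ1 δ * r = δ1 * r + δ := by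
    rw [c1const, ← hrdef, add_mul, div_mul_cancel₀ _ hr.ne']
  have hb : bconst δ1 δ * r = (c1const δ1 δ + 1) * δ1 * r + δ := by
    rw [bconst, ← hrdef, add_mul, div_mul_cancel₀ _ hr.ne']
  have htri' := htri v w u
  rw [hsymm v u] at htri'
  have hδ1pos : (0:ℝ) < δ1 := by positivity
  -- b*r < d v w ≤ δ1*(d u v + d u w) + δ ≤ δ1*d u v + δ1*(c1*r) + δ
  have key : bconst δ1 δ * r < δ1 * d u v + δ1 * (c1const δ1 δ * r) + δ := by
    calc bconst δ1 δ * r < d v w := hvw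
      _ ≤ δ1 * (d u v + d u w) + δ := htri'
      _ ≤ δ1 * d u v + δ1 * (c1const δ1 δ * r) + δ := by nlinarith
  rw [hb] at key
  nlinarith
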